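/- For every integer α ≥ 2, the formal power series R(X) = Σ_{n≥2} r_α(n)·X^{n−1} with rational coefficients satisfies the functional equation R(X) = X · Σ_{γ=0}^{α−1} R(X)^γ / γ! in the ring of formal power series ℚ⟦X⟧. -/

import Mathlib

open Finset PowerSeries

/-- The number `r_α(n)` of combinatorially inequivalent rooted tree graphs with
`n` vertices, root of coordination number 1, and all coordination numbers at
most `α`, given by the paper's closed (Cayley-type) formula, as a rational
number. -/
def rootedTreesQ (α n : ℕ) : ℚ :=
  (1 / (n - 1 : ℚ)) *
    ∑ f ∈ (Fintype.piFinset fun _ : Fin (n - 1) => Finset.range α) |>.filter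
        (fun f => ∑ i, f i = n - 2),
      ∏ i, (1 : ℚ) / (Nat.factorial (f i))

namespace RootedTreesAux

open Polynomial

/-- The truncated exponential polynomial `φ(t) = Σ_{γ<α} t^γ/γ!`. -/
noncomputable def phiP (α : ℕ) : Polynomial ℚ :=
  ∑ γ ∈ Finset.range α, Polynomial.C ((Nat.factorial γ : ℚ))⁻¹ * Polynomial.X ^ γ

lemma coeff_phiP (α j : ℕ) :
    (phiP α).coeff j = if j < α then ((Nat.factorial j : ℚ))⁻¹ else 0 := by
  rw [phiP, finset_sum_coeff]
  simp only [Polynomial.coeff_C_mul, Polynomial.coeff_X_pow, mul_ite, mul_one, mul_zero]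
  rw [Finset.sum_ite_eq (Finset.range α) j]
  simp [Finset.mem_range]

lemma natDegree_phiP_le (α : ℕ) : (phiP α).natDegree ≤ α - 1 := by
  apply Polynomial.natDegree_sum_le_of_forall_le
  intro γ hγ
  refine (natDegree_C_mul_le _ _).trans ?_
  simpa [Polynomial.natDegree_X_pow] using Nat.le_sub_one_of_lt (Finset.mem_range.mp hγ)

lemma aeval_phiP (α : ℕ) (T : ℚ⟦X⟧) :
    Polynomial.aeval T (phiP α) = ∑ γ ∈ Finset.range α, ((Nat.factorial γ : ℚ))⁻¹ • T ^ γ := by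
  simp [phiP, Algebra.smul_def]

/-- The key convolution identity, by formal differentiation. -/
lemma star (p : Polynomial ℚ) (k m : ℕ) (hk : 1 ≤ k) (hm : 1 ≤ m) :
    ∑ j ∈ Finset.range (m + 1), (j : ℚ) * (p ^ k).coeff j * (p ^ m).coeff (m - j)
      = (k : ℚ) * m / (m + k) * (p ^ (m + k)).coeff m := by
  have hm1 : m - 1 + 1 = m := by omega
  have hcast : ((m - 1 : ℕ) : ℚ) + 1 = m := by
    rw [Nat.cast_sub hm]; push_cast; ring
  have h1 : ((derivative (p ^ k)) * p ^ m).coeff (m - 1)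
      = ∑ j ∈ Finset.range (m + 1), (j : ℚ) * (p ^ k).coeff j * (p ^ m).coeff (m - j) := by
    rw [Polynomial.coeff_mul, Finset.Nat.sum_antidiagonal_eq_sum_range_succ_mk,
      show (m - 1).succ = m by omega, Finset.sum_range_succ']
    simp only [Nat.cast_zero, zero_mul, add_zero, Nat.cast_add, Nat.cast_one]
    apply Finset.sum_congr rfl
    intro a _
    have h : m - 1 - a = m - (a + 1) := by omega
    rw [Polynomial.coeff_derivative, h]
    ring
  have h2 : derivative (p ^ k) * p ^ m
      = Polynomial.C (k : ℚ) * (p ^ (m + k - 1) * derivative p) := by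
    rw [Polynomial.derivative_pow]
    have hp : p ^ (k - 1) * p ^ m = p ^ (m + k - 1) := by
      rw [← pow_add]; congr 1; omega
    calc Polynomial.C (k : ℚ) * p ^ (k - 1) * derivative p * p ^ m
        = Polynomial.C (k : ℚ) * (p ^ (k - 1) * p ^ m * derivative p) := by ring
      _ = Polynomial.C (k : ℚ) * (p ^ (m + k - 1) * derivative p) := by rw [hp]
  have h3 : derivative (p ^ (m + k))
      = Polynomial.C ((m + k : ℕ) : ℚ) * (p ^ (m + k - 1) * derivative p) := by
    rw [Polynomial.derivative_pow]; ring
  have h4 : (derivative (p ^ (m + k))).coeff (m - 1) = (p ^ (m + k)).coeff m * m := by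
    rw [Polynomial.coeff_derivative, hm1, hcast]
  have h5 : ((m + k : ℕ) : ℚ) ≠ 0 := by positivity
  have h6 : (p ^ (m + k - 1) * derivative p).coeff (m - 1)
      = (p ^ (m + k)).coeff m * m / ((m + k : ℕ) : ℚ) := by
    rw [eq_div_iff h5, ← h4, h3, Polynomial.coeff_C_mul]
    ring
  rw [← h1, h2, Polynomial.coeff_C_mul, h6]
  push_cast
  field_simp

/-- Iterates approximating the fixed point `S = X * φ(S)`. -/
noncomputable def sp (α : ℕ) : ℕ → ℚ⟦X⟧
  | 0 => 0
  | n + 1 => PowerSeries.X * Polynomial.aeval (sp α n) (phiP α)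

/-- The fixed-point power series. -/
noncomputable def S (α : ℕ) : ℚ⟦X⟧ :=
  PowerSeries.mk fun n => PowerSeries.coeff n (sp α (n + 1))

lemma sub_dvd_aeval_sub (T U : ℚ⟦X⟧) (p : Polynomial ℚ) :
    (T - U) ∣ Polynomial.aeval T p - Polynomial.aeval U p := by
  rw [Polynomial.aeval_def, Polynomial.aeval_def, Polynomial.eval₂_eq_eval_map,
    Polynomial.eval₂_eq_eval_map]
  exact Polynomial.sub_dvd_eval_sub T U _

lemma stab (α : ℕ) : ∀ n : ℕ, (PowerSeries.X : ℚ⟦X⟧) ^ (n + 1) ∣ sp α (n + 1) - sp α n := by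
  intro n
  induction n with
  | zero =>
    rw [pow_one]
    exact ⟨Polynomial.aeval (sp α 0) (phiP α), by simp [sp]⟩
  | succ n ih =>
    have h : sp α (n + 2) - sp α (n + 1)
        = PowerSeries.X * (Polynomial.aeval (sp α (n + 1)) (phiP α)
            - Polynomial.aeval (sp α n) (phiP α)) := by
      simp [sp]; ring
    rw [h, pow_succ, mul_comm ((PowerSeries.X : ℚ⟦X⟧) ^ (n + 1)) PowerSeries.X]
    exact mul_dvd_mul_left _ (dvd_trans ih (sub_dvd_aeval_sub _ _ _))

lemma coeff_sp_stable (α k : ℕ) : ∀ n : ℕ, k < n →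
    PowerSeries.coeff k (sp α n) = PowerSeries.coeff k (S α) := by
  intro n
  induction n with
  | zero => omega
  | succ n ih =>
    intro hk
    rcases Nat.lt_or_ge k n with h | h
    · rw [← ih h]
      have := stab α n
      rw [PowerSeries.X_pow_dvd_iff] at this
      have h0 := this k (by omega)
      rw [map_sub] at h0
      linarith [h0]
    · have : k = n := by omega
      subst this
      rw [S, PowerSeries.coeff_mk]

lemma X_pow_dvd_sub_sp (α n : ℕ) : (PowerSeries.X : ℚ⟦X⟧) ^ n ∣ S α - sp α n := by
  rw [PowerSeries.X_pow_dvd_iff]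
  intro m hm
  rw [map_sub, coeff_sp_stable α m n hm, sub_self]

/-- The functional equation for `S`. -/
lemma S_eq (α : ℕ) : S α = PowerSeries.X * Polynomial.aeval (S α) (phiP α) := by
  ext n
  have hS : PowerSeries.coeff n (S α) = PowerSeries.coeff n (sp α (n + 1)) := by
    rw [S, PowerSeries.coeff_mk]
  rw [hS]
  show PowerSeries.coeff n (PowerSeries.X * Polynomial.aeval (sp α n) (phiP α)) = _
  have h : PowerSeries.coeff n
      (PowerSeries.X * Polynomial.aeval (S α) (phiP α)
        - PowerSeries.X * Polynomial.aeval (sp α n) (phiP α)) = 0 := by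
    have hd : (PowerSeries.X : ℚ⟦X⟧) ^ (n + 1) ∣
        PowerSeries.X * Polynomial.aeval (S α) (phiP α)
          - PowerSeries.X * Polynomial.aeval (sp α n) (phiP α) := by
      rw [← mul_sub, pow_succ, mul_comm ((PowerSeries.X : ℚ⟦X⟧) ^ n) PowerSeries.X]
      exact mul_dvd_mul_left _ ((X_pow_dvd_sub_sp α n).trans (sub_dvd_aeval_sub _ _ _))
    rw [PowerSeries.X_pow_dvd_iff] at hd
    exact hd n (by omega)
  rw [map_sub, sub_eq_zero] at h
  exact h.symm

lemma constantCoeff_S (α : ℕ) : PowerSeries.constantCoeff (S α) = 0 := by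
  rw [← PowerSeries.coeff_zero_eq_constantCoeff_apply]
  have hS : PowerSeries.coeff 0 (S α) = PowerSeries.coeff 0 (sp α 1) := by
    rw [S, PowerSeries.coeff_mk]
  rw [hS]
  show PowerSeries.coeff 0 (PowerSeries.X * Polynomial.aeval (sp α 0) (phiP α)) = 0
  simp

/-- Lagrange-inversion-type formula for the coefficients of powers of `S`. -/
lemma key (α : ℕ) : ∀ n : ℕ, ∀ k : ℕ, 1 ≤ k →
    PowerSeries.coeff n (S α ^ k)
      = if k ≤ n then (k : ℚ) / n * ((phiP α ^ n).coeff (n - k)) else 0 := by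
  intro n
  induction n using Nat.strong_induction_on with
  | _ n IH =>
    intro k hk
    rcases lt_or_ge n k with hnk | hnk
    · rw [if_neg (by omega)]
      have hXS : (PowerSeries.X : ℚ⟦X⟧) ∣ S α := by
        rw [PowerSeries.X_dvd_iff]
        exact constantCoeff_S α
      have hd : (PowerSeries.X : ℚ⟦X⟧) ^ k ∣ S α ^ k := pow_dvd_pow_of_dvd hXS k
      rw [PowerSeries.X_pow_dvd_iff] at hd
      exact hd n hnk
    · have hXφ : S α ^ k = PowerSeries.X ^ k * Polynomial.aeval (S α) (phiP α ^ k) := by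
        conv_lhs => rw [S_eq α, mul_pow, ← map_pow]
      rw [hXφ, if_pos hnk, PowerSeries.coeff_X_pow_mul', if_pos hnk]
      set m := n - k with hmdef
      set N := k * (α - 1) + 1 with hNdef
      have hdeg : (phiP α ^ k).natDegree < N := by
        have h1 := Polynomial.natDegree_pow_le (p := phiP α) (n := k)
        have h2 := natDegree_phiP_le α
        have : (phiP α ^ k).natDegree ≤ k * (α - 1) :=
          le_trans h1 (Nat.mul_le_mul_left k h2)
        omega
      have hexp : Polynomial.aeval (S α) (phiP α ^ k)
          = ∑ j ∈ Finset.range N, (phiP α ^ k).coeff j • S α ^ j :=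
        Polynomial.aeval_eq_sum_range' hdeg _
      rw [hexp, map_sum]
      simp only [map_smul, smul_eq_mul]
      rcases Nat.eq_zero_or_pos m with hm0 | hm1
      · -- here `n = k`
        have hnkeq : n = k := by omega
        rw [hm0, Finset.sum_eq_single 0]
        · rw [pow_zero, hnkeq]
          rw [div_self (show (k : ℚ) ≠ 0 from Nat.cast_ne_zero.mpr (by omega)), one_mul]
          simp
        · intro j hj hj0
          have h0 : PowerSeries.coeff 0 (S α ^ j) = 0 := by
            rw [PowerSeries.coeff_zero_eq_constantCoeff_apply, map_pow, constantCoeff_S α,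
              zero_pow hj0]
          rw [h0, mul_zero]
        · intro h0
          exact absurd (Finset.mem_range.mpr (by omega)) h0
      · -- here `1 ≤ m`
        have hmQ : (m : ℚ) ≠ 0 := Nat.cast_ne_zero.mpr (by omega)
        have hterm : ∀ j ∈ Finset.range N,
            (phiP α ^ k).coeff j * PowerSeries.coeff m (S α ^ j)
              = (phiP α ^ k).coeff j *
                  (if j ≤ m then (j : ℚ) / m * ((phiP α ^ m).coeff (m - j)) else 0) := by
          intro j _
          rcases Nat.eq_zero_or_pos j with hj0 | hj1
          · subst hj0
            rw [pow_zero, PowerSeries.coeff_one, if_neg (by omega), if_pos (by omega)]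
            norm_num
          · rw [IH m (by omega) j hj1]
        rw [Finset.sum_congr rfl hterm]
        have hstep1 : ∑ j ∈ Finset.range N, (phiP α ^ k).coeff j *
              (if j ≤ m then (j : ℚ) / m * ((phiP α ^ m).coeff (m - j)) else 0)
            = ∑ j ∈ Finset.range (N + m + 1), (phiP α ^ k).coeff j *
              (if j ≤ m then (j : ℚ) / m * ((phiP α ^ m).coeff (m - j)) else 0) := by
          apply Finset.sum_subset (Finset.range_subset_range.mpr (by omega))
          intro j _ hj
          have hNj : N ≤ j := by
            by_contra hc
            exact hj (Finset.mem_range.mpr (by omega))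
          rw [Polynomial.coeff_eq_zero_of_natDegree_lt (lt_of_lt_of_le hdeg hNj), zero_mul]
        have hstep2 : ∑ j ∈ Finset.range (m + 1), (phiP α ^ k).coeff j *
              (if j ≤ m then (j : ℚ) / m * ((phiP α ^ m).coeff (m - j)) else 0)
            = ∑ j ∈ Finset.range (N + m + 1), (phiP α ^ k).coeff j *
              (if j ≤ m then (j : ℚ) / m * ((phiP α ^ m).coeff (m - j)) else 0) := by
          apply Finset.sum_subset (Finset.range_subset_range.mpr (by omega))
          intro j _ hj
          have hmj : m < j := by
            by_contra hc
            exact hj (Finset.mem_range.mpr (by omega))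
          rw [if_neg (by omega), mul_zero]
        have hstep2' : ∑ j ∈ Finset.range (m + 1), (phiP α ^ k).coeff j *
              (if j ≤ m then (j : ℚ) / m * ((phiP α ^ m).coeff (m - j)) else 0)
            = ∑ j ∈ Finset.range (m + 1), (phiP α ^ k).coeff j *
              ((j : ℚ) / m * ((phiP α ^ m).coeff (m - j))) := by
          apply Finset.sum_congr rfl
          intro j hj
          rw [if_pos (Nat.lt_succ_iff.mp (Finset.mem_range.mp hj))]
        rw [hstep1, ← hstep2, hstep2']
        have hstep3 : ∑ j ∈ Finset.range (m + 1), (phiP α ^ k).coeff j *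
              ((j : ℚ) / m * ((phiP α ^ m).coeff (m - j)))
            = (1 / m) * ∑ j ∈ Finset.range (m + 1),
                (j : ℚ) * (phiP α ^ k).coeff j * ((phiP α ^ m).coeff (m - j)) := by
          rw [Finset.mul_sum]
          apply Finset.sum_congr rfl
          intro j _
          field_simp
        rw [hstep3, star (phiP α) k m hk hm1]
        have hn : m + k = n := by omega
        rw [hn]
        have hcast : ((m : ℚ) + k) = n := by
          rw [← hn]; push_cast; ring
        rw [hcast]
        have hnQ : (n : ℚ) ≠ 0 := Nat.cast_ne_zero.mpr (by omega)
        field_simp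

/-- Coefficients of powers of `φ` count weighted tuples. -/
lemma coeff_pow_phiP (α k m : ℕ) :
    (phiP α ^ k).coeff m
      = ∑ f ∈ (Fintype.piFinset fun _ : Fin k => Finset.range α).filter
          (fun f => ∑ i, f i = m), ∏ i, (1 : ℚ) / (Nat.factorial (f i)) := by
  have h1 : (phiP α ^ k).coeff m
      = PowerSeries.coeff m (((phiP α : ℚ⟦X⟧)) ^ k) := by
    rw [← Polynomial.coe_pow, Polynomial.coeff_coe]
  have h2 : ((phiP α : ℚ⟦X⟧)) ^ k = ∏ _i ∈ (Finset.univ : Finset (Fin k)), (phiP α : ℚ⟦X⟧) := by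
    rw [Finset.prod_const, Finset.card_univ, Fintype.card_fin]
  rw [h1, h2, PowerSeries.coeff_prod]
  have h3 : ∀ l : Fin k →₀ ℕ, ∀ i : Fin k,
      PowerSeries.coeff (l i) (phiP α : ℚ⟦X⟧)
        = if l i < α then ((Nat.factorial (l i) : ℚ))⁻¹ else 0 := by
    intro l i
    rw [Polynomial.coeff_coe, coeff_phiP]
  have h4 : ∑ l ∈ finsuppAntidiag (Finset.univ : Finset (Fin k)) m,
        ∏ i ∈ Finset.univ, PowerSeries.coeff (l i) (phiP α : ℚ⟦X⟧)
      = ∑ l ∈ (finsuppAntidiag (Finset.univ : Finset (Fin k)) m).filter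
          (fun l => ∀ i, l i < α),
        ∏ i ∈ Finset.univ, PowerSeries.coeff (l i) (phiP α : ℚ⟦X⟧) := by
    refine (Finset.sum_filter_of_ne ?_).symm
    intro l _ hl
    by_contra hc
    push_neg at hc
    obtain ⟨i, hi⟩ := hc
    exact hl (Finset.prod_eq_zero (Finset.mem_univ i)
      (by rw [h3 l i, if_neg (by omega)]))
  rw [h4]
  refine Finset.sum_nbij' (fun l => (l : Fin k → ℕ))
    (fun f => Finsupp.equivFunOnFinite.symm f) ?_ ?_ ?_ ?_ ?_
  · intro l hl
    rw [Finset.mem_filter] at hl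
    obtain ⟨hl1, hl2⟩ := hl
    rw [Finset.mem_finsuppAntidiag] at hl1
    rw [Finset.mem_filter]
    constructor
    · rw [Fintype.mem_piFinset]
      intro i
      exact Finset.mem_range.mpr (hl2 i)
    · exact hl1.1
  · intro f hf
    rw [Finset.mem_filter] at hf
    obtain ⟨hf1, hf2⟩ := hf
    rw [Fintype.mem_piFinset] at hf1
    rw [Finset.mem_filter, Finset.mem_finsuppAntidiag]
    refine ⟨⟨?_, Finset.subset_univ _⟩, ?_⟩
    · simpa [Finsupp.coe_equivFunOnFinite_symm] using hf2
    · intro i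
      simpa [Finsupp.coe_equivFunOnFinite_symm] using
        Finset.mem_range.mp (hf1 i)
  · intro l _
    exact Finsupp.equivFunOnFinite_symm_coe l
  · intro f _
    funext i
    simp [Finsupp.coe_equivFunOnFinite_symm]
  · intro l hl
    rw [Finset.mem_filter] at hl
    apply Finset.prod_congr rfl
    intro i _
    rw [h3 l i, if_pos (hl.2 i), one_div]

/-- `S` equals the generating series of the `rootedTreesQ` numbers. -/
lemma S_eq_series (α : ℕ) :
    S α = PowerSeries.mk fun k => if k = 0 then (0 : ℚ) else rootedTreesQ α (k + 1) := by
  ext n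
  rw [PowerSeries.coeff_mk]
  rcases Nat.eq_zero_or_pos n with hn0 | hn1
  · subst hn0
    rw [if_pos rfl, PowerSeries.coeff_zero_eq_constantCoeff_apply, constantCoeff_S α]
  · rw [if_neg (by omega)]
    have h1 : PowerSeries.coeff n (S α) = PowerSeries.coeff n (S α ^ 1) := by
      rw [pow_one]
    rw [h1, key α n 1 le_rfl, if_pos (show 1 ≤ n from hn1)]
    rw [rootedTreesQ]
    have h2 : ((n + 1 : ℕ) : ℚ) - 1 = (n : ℚ) := by push_cast; ring
    have h3 : n + 1 - 1 = n := by omega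
    have h4 : n + 1 - 2 = n - 1 := by omega
    rw [h2, h3, h4, coeff_pow_phiP α n (n - 1)]
    push_cast
    ring

end RootedTreesAux

/-- **Functional equation for the generating series of rooted branched
polymers.**  For `α ≥ 2`, the formal power series
`R(X) = Σ_{n≥2} r_α(n)·X^{n−1} ∈ ℚ⟦X⟧` satisfies
`R(X) = X · Σ_{γ=0}^{α−1} R(X)^γ / γ!`. -/
theorem rootedTrees_generating_series_eq (α : ℕ) (hα : 2 ≤ α) :
    (PowerSeries.mk fun k => if k = 0 then (0 : ℚ) else rootedTreesQ α (k + 1))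
      = PowerSeries.X *
        ∑ γ ∈ Finset.range α,
          ((Nat.factorial γ : ℚ))⁻¹ •
            (PowerSeries.mk fun k =>
              if k = 0 then (0 : ℚ) else rootedTreesQ α (k + 1)) ^ γ := by
  rw [← RootedTreesAux.S_eq_series α, ← RootedTreesAux.aeval_phiP α (RootedTreesAux.S α)]
  exact RootedTreesAux.S_eq α
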